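/- Let a, d be coprime positive integers with a odd, a ≥ 3, and h ≥ 1. The Frobenius number of S = ⟨a, h·a+d, h·a+2d⟩ is F(S) = a·(h·a+2d) − a − ((a−1)/2 + 1)·(h·a+2d); i.e., this number is not in S, and every larger integer is in S. -/
import Mathlib


theorem stmt_13 (a d h : ℕ) (ha : 3 ≤ a) (haodd : Odd a) (hd : 0 < d)
    (hh : 1 ≤ h) (hcop : Nat.gcd a d = 1) :
    (¬ ∃ l₁ l₂ l₃ : ℕ, ((a : ℤ) * (h * a + 2 * d) - a - ((a - 1) / 2 + 1) * (h * a + 2 * d))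
        = l₁ * a + l₂ * (h * a + d) + l₃ * (h * a + 2 * d)) ∧
    ∀ n : ℤ, (a : ℤ) * (h * a + 2 * d) - a - ((a - 1) / 2 + 1) * (h * a + 2 * d) < n →
      ∃ l₁ l₂ l₃ : ℕ, n = l₁ * a + l₂ * (h * a + d) + l₃ * (h * a + 2 * d) := by
  obtain ⟨m, hm⟩ := haodd
  have hm1 : 1 ≤ m := by omega
  have haZ : (a : ℤ) = 2 * m + 1 := by
    subst hm; push_cast; ring
  have hdiv : ((a : ℤ) - 1) / 2 + 1 = (m : ℤ) + 1 := by
    rw [haZ]; omega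
  have hF : (a : ℤ) * (h * a + 2 * d) - a - ((a - 1) / 2 + 1) * (h * a + 2 * d)
      = (m : ℤ) * ((h : ℤ) * a + 2 * d) - a := by
    rw [hdiv, haZ]; ring
  have haZ0 : (0 : ℤ) < (a : ℤ) := by exact_mod_cast (by omega : 0 < a)
  have hdZ : (1 : ℤ) ≤ (d : ℤ) := by exact_mod_cast hd
  have hhZ : (1 : ℤ) ≤ (h : ℤ) := by exact_mod_cast hh
  have hcopZ : IsCoprime (a : ℤ) (d : ℤ) := by
    rw [Int.isCoprime_iff_gcd_eq_one, Int.gcd_natCast_natCast]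
    exact hcop
  constructor
  · rintro ⟨l₁, l₂, l₃, heq⟩
    rw [hF] at heq
    have key : (2 * (m : ℤ) - ((l₂ : ℤ) + 2 * l₃)) * d
        = ((l₁ : ℤ) + ((l₂ : ℤ) + l₃) * h - m * h + 1) * a := by
      rw [haZ] at heq ⊢; linear_combination heq
    have hdvd : (a : ℤ) ∣ (2 * (m : ℤ) - ((l₂ : ℤ) + 2 * l₃)) := by
      apply hcopZ.dvd_of_dvd_mul_right
      exact ⟨_, key.trans (mul_comm _ _)⟩
    obtain ⟨k, hk⟩ := hdvd
    have hkd : (k : ℤ) * d = (l₁ : ℤ) + ((l₂ : ℤ) + l₃) * h - m * h + 1 := by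
      have h2 : (k : ℤ) * d * a = ((l₁ : ℤ) + ((l₂ : ℤ) + l₃) * h - m * h + 1) * a := by
        rw [← key, hk]; ring
      exact mul_right_cancel₀ (by positivity) h2
    have hl₂ : (0 : ℤ) ≤ (l₂ : ℤ) := Int.natCast_nonneg _
    have hl₃ : (0 : ℤ) ≤ (l₃ : ℤ) := Int.natCast_nonneg _
    have hl₁ : (0 : ℤ) ≤ (l₁ : ℤ) := Int.natCast_nonneg _
    rcases lt_trichotomy k 0 with hk0 | hk0 | hk0
    · -- k ≤ -1
      have hk1 : k ≤ -1 := by omega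
      have hak : (a : ℤ) * k ≤ (a : ℤ) * (-1) :=
        mul_le_mul_of_nonneg_left hk1 (le_of_lt haZ0)
      have hkd1 : (k : ℤ) * d ≤ -1 := by
        have h1 : (k : ℤ) * d ≤ (-1) * d :=
          mul_le_mul_of_nonneg_right hk1 (by linarith)
        linarith
      have hL : ((l₂ : ℤ) + l₃) * h ≤ m * h - 2 := by linarith [hkd]
      have hLm : (l₂ : ℤ) + l₃ ≤ m - 1 := by
        by_contra hcon
        push_neg at hcon
        have : (m : ℤ) * h ≤ ((l₂ : ℤ) + l₃) * h := by
          apply mul_le_mul_of_nonneg_right _ (by linarith)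
          omega
        linarith
      have hT : 2 * (m : ℤ) - ((l₂ : ℤ) + 2 * l₃) ≤ -a := by
        rw [hk]; linarith
      rw [haZ] at hT
      linarith
    · subst hk0
      rw [mul_zero] at hk
      have hLm : (m : ℤ) ≤ (l₂ : ℤ) + l₃ := by linarith
      have hz : (0 : ℤ) = (l₁ : ℤ) + ((l₂ : ℤ) + l₃) * h - m * h + 1 := by
        simpa using hkd
      have : (m : ℤ) * h ≤ ((l₂ : ℤ) + l₃) * h :=
        mul_le_mul_of_nonneg_right hLm (by linarith)
      linarith
    · have hk1 : 1 ≤ k := by omega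
      have hak : (a : ℤ) * 1 ≤ (a : ℤ) * k :=
        mul_le_mul_of_nonneg_left hk1 (le_of_lt haZ0)
      rw [mul_one] at hak
      have hT : (a : ℤ) ≤ 2 * (m : ℤ) - ((l₂ : ℤ) + 2 * l₃) := by
        rw [hk]; exact hak
      rw [haZ] at hT
      linarith
  · intro n hn
    rw [hF] at hn
    obtain ⟨u, v, huv⟩ := hcopZ
    set t0 : ℤ := (n * v) % (a : ℤ) with ht0def
    have ht0 : 0 ≤ t0 := Int.emod_nonneg _ (by positivity)
    have ht0' : t0 < (a : ℤ) := Int.emod_lt_of_pos _ haZ0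
    have hdvd1 : (a : ℤ) ∣ n * v - t0 := Int.dvd_self_sub_of_emod_eq rfl
    have hdvd : (a : ℤ) ∣ n - t0 * d := by
      have heq1 : n - t0 * d = n * u * a + (n * v - t0) * d := by
        linear_combination (-n) * huv
      rw [heq1]
      exact dvd_add ⟨n * u, by ring⟩ (Dvd.dvd.mul_right hdvd1 d)
    set t : ℕ := t0.toNat with htdef
    have htt : (t : ℤ) = t0 := Int.toNat_of_nonneg ht0
    have ht2m : t ≤ 2 * m := by
      have : (t : ℤ) < 2 * m + 1 := by rw [htt]; rw [haZ] at ht0'; exact ht0'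
      exact_mod_cast by omega
    set l₂ : ℕ := t % 2 with hl₂def
    set l₃ : ℕ := t / 2 with hl₃def
    have hsum : l₂ + 2 * l₃ = t := by omega
    have hLm : l₂ + l₃ ≤ m := by omega
    set N : ℤ := n - ((l₂ : ℤ) * ((h : ℤ) * a + d) + (l₃ : ℤ) * ((h : ℤ) * a + 2 * d))
      with hNdef
    have hNsplit : N = (n - t0 * d) - (((l₂ : ℤ) + l₃) * h) * a := by
      have hsZ : (l₂ : ℤ) + 2 * l₃ = (t : ℤ) := by exact_mod_cast hsum
      rw [hNdef, ← htt]
      linear_combination (-(d : ℤ)) * hsZ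
    have hNdvd : (a : ℤ) ∣ N := by
      rw [hNsplit]
      exact dvd_sub hdvd ⟨((l₂ : ℤ) + l₃) * h, mul_comm _ _⟩
    have hNlb : -(a : ℤ) < N := by
      have hLmZ : (l₂ : ℤ) + l₃ ≤ (m : ℤ) := by exact_mod_cast hLm
      have ht2mZ : (t : ℤ) ≤ 2 * m := by exact_mod_cast ht2m
      have h1 : (0 : ℤ) ≤ ((m : ℤ) - ((l₂ : ℤ) + l₃)) * ((h : ℤ) * a) := by
        apply mul_nonneg (by linarith)
        positivity
      have h2 : (0 : ℤ) ≤ (2 * (m : ℤ) - t) * d := by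
        apply mul_nonneg (by linarith) (by linarith)
      have hNeq : N = (n - ((m : ℤ) * ((h : ℤ) * a + 2 * d) - a))
          + ((m : ℤ) - ((l₂ : ℤ) + l₃)) * ((h : ℤ) * a)
          + (2 * (m : ℤ) - t) * d - a := by
        rw [hNsplit, ← htt]; ring
      have hn' : (0 : ℤ) < n - ((m : ℤ) * ((h : ℤ) * a + 2 * d) - a) := by linarith
      rw [hNeq]; linarith
    have hN0 : 0 ≤ N := by
      by_contra hneg
      push_neg at hneg
      have hle : (a : ℤ) ≤ -N := Int.le_of_dvd (by omega) (dvd_neg.mpr hNdvd)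
      omega
    obtain ⟨c, hc⟩ := hNdvd
    have hc0 : 0 ≤ c := by
      by_contra hcneg
      push_neg at hcneg
      nlinarith
    refine ⟨c.toNat, l₂, l₃, ?_⟩
    have hct : ((c.toNat : ℤ)) = c := Int.toNat_of_nonneg hc0
    rw [hct]
    have : N = (a : ℤ) * c := hc
    rw [hNdef] at this
    linarith
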